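/- Let T be a bounded self-adjoint operator on a separable infinite-dimensional complex Hilbert space H such that ⟨ψ, Tψ⟩ ≤ 0 for all ψ ∈ H and 0 ∈ σ(T), and let α : (0,∞) → (0,∞) be a function with α(t) → ∞ as t → ∞. Then there exist η ∈ H and a sequence t_j → ∞ such that, for all sufficiently large j, μ_η^T(B(0; 1/t_j)) ≥ 1/α(t_j). -/

import Mathlib

open MeasureTheory Filter Set Metric
open scoped ENNReal Topology Classical

noncomputable section

/-- `μ` is uniformly `α`-Hölder continuous: there is `C > 0` with
`μ(I) < C |I|^α` for every (nondegenerate) interval `I` with `|I| < 1`. -/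
def UnifHolder (μ : Measure ℝ) (α : ℝ) : Prop :=
  ∃ C > (0 : ℝ), ∀ a b : ℝ, a < b → b - a < 1 →
    μ (Set.Icc a b) < ENNReal.ofReal (C * (b - a) ^ α)

/-- The Fourier transform `μ̂(s) = ∫ e^{-isx} dμ(x)` of a finite Borel measure on `ℝ`. -/
def measureFT (μ : Measure ℝ) (s : ℝ) : ℂ :=
  ∫ x : ℝ, Complex.exp (-(s * x) * Complex.I) ∂μ

/-- The time-average quantum return probability
`W_μ(t) = (1/t) ∫_0^t |μ̂(s)|² ds`. -/
def Wavg (μ : Measure ℝ) (t : ℝ) : ℝ :=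
  (1 / t) * ∫ s in Set.Ioc (0 : ℝ) t, ‖measureFT μ s‖ ^ 2

/-- `μ` is the spectral measure of the pair `(T, ψ)`: it is finite, vanishes outside
the spectrum of `T`, and `∫ f dμ = ⟨ψ, f(T)ψ⟩` for every continuous `f : ℝ → ℝ`,
where `f(T)` is given by the continuous functional calculus. -/
def IsSpectralMeasure {H : Type*} [NormedAddCommGroup H] [InnerProductSpace ℂ H]
    [CompleteSpace H] (T : H →L[ℂ] H) (ψ : H) (μ : Measure ℝ) : Prop :=
  IsFiniteMeasure μ ∧ μ {x : ℝ | (x : ℂ) ∉ spectrum ℂ T} = 0 ∧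
    ∀ f : C(ℝ, ℝ), ∫ x, f x ∂μ = (inner ℂ ψ ((cfc (f : ℝ → ℝ) T) ψ) : ℂ).re

/-- The real part of the spectrum of a bounded operator. -/
def realSpectrum {H : Type*} [NormedAddCommGroup H] [InnerProductSpace ℂ H]
    [CompleteSpace H] (T : H →L[ℂ] H) : Set ℝ :=
  {x : ℝ | (x : ℂ) ∈ spectrum ℂ T}

/-- `μ` is `α`-Hausdorff continuous: `μ(Λ) = 0` for every Borel set `Λ` with
`h^α(Λ) = 0`. -/
def HausdorffCont (μ : Measure ℝ) (α : ℝ) : Prop :=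
  ∀ Λ : Set ℝ, MeasurableSet Λ → μH[α] Λ = 0 → μ Λ = 0

/-- The lower pointwise scaling exponent `d⁻_μ(x)`, with value `∞` when
`μ(B(x;ε)) = 0` for some `ε > 0`. -/
def dLow (μ : Measure ℝ) (x : ℝ) : EReal :=
  if ∃ ε > (0 : ℝ), μ (Metric.ball x ε) = 0 then ⊤
  else Filter.liminf
    (fun ε : ℝ => ((Real.log (μ (Metric.ball x ε)).toReal / Real.log ε : ℝ) : EReal))
    (𝓝[>] (0 : ℝ))

/-- The upper pointwise scaling exponent `d⁺_μ(x)`, with value `∞` when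
`μ(B(x;ε)) = 0` for some `ε > 0`. -/
def dUp (μ : Measure ℝ) (x : ℝ) : EReal :=
  if ∃ ε > (0 : ℝ), μ (Metric.ball x ε) = 0 then ⊤
  else Filter.limsup
    (fun ε : ℝ => ((Real.log (μ (Metric.ball x ε)).toReal / Real.log ε : ℝ) : EReal))
    (𝓝[>] (0 : ℝ))

/-- The lower correlation dimension `D⁻_μ(2)`. -/
def DLow2 (μ : Measure ℝ) : EReal :=
  Filter.liminf
    (fun ε : ℝ =>
      ((Real.log (∫ x, (μ (Metric.ball x ε)).toReal ∂μ) / Real.log ε : ℝ) : EReal))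
    (𝓝[>] (0 : ℝ))

/-- The upper correlation dimension `D⁺_μ(2)`. -/
def DUp2 (μ : Measure ℝ) : EReal :=
  Filter.limsup
    (fun ε : ℝ =>
      ((Real.log (∫ x, (μ (Metric.ball x ε)).toReal ∂μ) / Real.log ε : ℝ) : EReal))
    (𝓝[>] (0 : ℝ))

/-- A set is generic (residual / comeagre in the Baire sense used in the paper)
if it contains a dense `G_δ` set. -/
def Generic {X : Type*} [TopologicalSpace X] (A : Set X) : Prop :=
  ∃ S : Set X, S ⊆ A ∧ IsGδ S ∧ Dense S

/-- cutoff function -/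
def cutoff (d : ℝ) : C(ℝ, ℝ) :=
  ⟨fun x => min 1 (max 0 (2 - |x| / d)),
   continuous_const.min (continuous_const.max (continuous_const.sub (continuous_abs.div_const d)))⟩

lemma cutoff_nonneg (d x : ℝ) : 0 ≤ cutoff d x :=
  le_min zero_le_one (le_max_left _ _)

lemma cutoff_le_one (d x : ℝ) : cutoff d x ≤ 1 := min_le_left _ _

lemma cutoff_eq_one {d x : ℝ} (hd : 0 < d) (h : |x| ≤ d) : cutoff d x = 1 := by
  have h1 : |x| / d ≤ 1 := (div_le_one hd).2 h
  have : (1:ℝ) ≤ 2 - |x| / d := by linarith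
  simp only [cutoff, ContinuousMap.coe_mk]
  rw [max_eq_right (by linarith), min_eq_left this]

lemma cutoff_eq_zero {d x : ℝ} (hd : 0 < d) (h : 2 * d ≤ |x|) : cutoff d x = 0 := by
  have h1 : (2:ℝ) ≤ |x| / d := (le_div_iff₀ hd).2 (by linarith)
  simp only [cutoff, ContinuousMap.coe_mk]
  rw [max_eq_left (by linarith), min_eq_right zero_le_one]

section ops
variable {H : Type*} [NormedAddCommGroup H] [InnerProductSpace ℂ H] [CompleteSpace H]
  (T : H →L[ℂ] H) (hT : IsSelfAdjoint T) (μm : H → Measure ℝ)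
  (hμm : ∀ ψ : H, IsSpectralMeasure T ψ (μm ψ))

include hμm in
lemma sm_integrable (ψ : H) (f : ℝ → ℝ) (hf : Continuous f) (hb : ∀ x, |f x| ≤ 1) :
    Integrable f (μm ψ) := by
  have : IsFiniteMeasure (μm ψ) := (hμm ψ).1
  exact (integrable_const (1:ℝ)).mono' hf.aestronglyMeasurable
    (Filter.Eventually.of_forall fun x => by simpa using hb x)

include hT hμm in
lemma sm_sq (ψ : H) (g : C(ℝ, ℝ)) :
    ∫ x, (g x) ^ 2 ∂(μm ψ) = ‖cfc (g : ℝ → ℝ) T ψ‖ ^ 2 := by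
  have h := (hμm ψ).2.2 (g * g)
  have hcoe : ((g * g : C(ℝ,ℝ)) : ℝ → ℝ) = fun x => g x * g x := rfl
  rw [hcoe] at h
  have hmul : cfc (fun x => g x * g x) T = cfc (g : ℝ → ℝ) T * cfc (g : ℝ → ℝ) T :=
    cfc_mul _ _ T g.continuous.continuousOn g.continuous.continuousOn
  rw [hmul] at h
  have hsa : IsSelfAdjoint (cfc (g : ℝ → ℝ) T) := cfc_predicate _ T
  have hadj := ContinuousLinearMap.isSelfAdjoint_iff'.mp hsa
  calc ∫ x, (g x) ^ 2 ∂(μm ψ) = ∫ x, g x * g x ∂(μm ψ) := by simp [pow_two]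
    _ = (inner ℂ ψ ((cfc (g : ℝ → ℝ) T * cfc (g : ℝ → ℝ) T) ψ) : ℂ).re := h
    _ = (inner ℂ ψ ((cfc (g : ℝ → ℝ) T) ((cfc (g : ℝ → ℝ) T) ψ)) : ℂ).re := by
        rw [ContinuousLinearMap.mul_apply]
    _ = (inner ℂ ((cfc (g : ℝ → ℝ) T) ψ) ((cfc (g : ℝ → ℝ) T) ψ) : ℂ).re := by
        have h2 := ContinuousLinearMap.adjoint_inner_left (cfc (g : ℝ → ℝ) T)
          ((cfc (g : ℝ → ℝ) T) ψ) ψ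
        rw [hadj] at h2
        rw [← h2]
    _ = ‖cfc (g : ℝ → ℝ) T ψ‖ ^ 2 := by
        simpa using inner_self_eq_norm_sq (𝕜 := ℂ) ((cfc (g : ℝ → ℝ) T) ψ)

include hT hμm in
lemma sm_ub (ψ : H) (g : C(ℝ, ℝ)) (s : Set ℝ) (hs : MeasurableSet s)
    (h0 : ∀ x, 0 ≤ g x) (h1 : ∀ x, g x ≤ 1) (hvan : ∀ x ∉ s, g x = 0) :
    ‖cfc (g : ℝ → ℝ) T ψ‖ ^ 2 ≤ ((μm ψ) s).toReal := by
  have : IsFiniteMeasure (μm ψ) := (hμm ψ).1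
  rw [← sm_sq T hT μm hμm ψ g, ← Measure.real_def, ← integral_indicator_one hs]
  refine integral_mono (by
    refine sm_integrable T μm hμm ψ _ (by continuity) fun x => ?_
    rw [abs_pow, abs_of_nonneg (h0 x)]
    exact pow_le_one₀ (h0 x) (h1 x)) ((integrable_const (1:ℝ)).indicator hs) ?_
  intro x
  by_cases hx : x ∈ s
  · simp only [Set.indicator_of_mem hx, Pi.one_apply]
    exact pow_le_one₀ (h0 x) (h1 x)
  · simp [Set.indicator_of_notMem hx, hvan x hx]

include hT hμm in
lemma sm_mass (ψ : H) : ((μm ψ) Set.univ).toReal = ‖ψ‖ ^ 2 := by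
  have : IsFiniteMeasure (μm ψ) := (hμm ψ).1
  have h := (hμm ψ).2.2 1
  have hcoe : ((1 : C(ℝ,ℝ)) : ℝ → ℝ) = (1 : ℝ → ℝ) := rfl
  rw [hcoe, cfc_one ℝ T hT] at h
  simp only [Pi.one_apply, ContinuousLinearMap.one_apply] at h
  rw [integral_const] at h
  have h3 : (inner ℂ ψ ψ : ℂ).re = ‖ψ‖ ^ 2 := by
    simpa using inner_self_eq_norm_sq (𝕜 := ℂ) ψ
  rw [h3] at h
  simpa [measureReal_def] using h

include hT hμm in
lemma unit_support (h0 : (0 : ℂ) ∈ spectrum ℂ T) (d : ℝ) (hd : 0 < d) :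
    ∃ ψ : H, ‖ψ‖ = 1 ∧ μm ψ ((ball (0:ℝ) d)ᶜ) = 0 := by
  have : IsFiniteMeasure (μm (0:H)) := (hμm 0).1
  set f : C(ℝ, ℝ) := cutoff (d/4) with hf
  have hf0 : f 0 = 1 := cutoff_eq_one (by linarith) (by simp; linarith)
  have h0R : (0:ℝ) ∈ spectrum ℝ T := by
    rw [spectrum.zero_mem_iff] at h0 ⊢
    exact h0
  have hA1 : 1 ≤ ‖cfc (f : ℝ → ℝ) T‖ := by
    have := norm_apply_le_norm_cfc (f : ℝ → ℝ) T h0R f.continuous.continuousOn hT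
    simpa [hf0] using this
  have hAne : ∃ φ : H, cfc (f : ℝ → ℝ) T φ ≠ 0 := by
    by_contra hc
    push_neg at hc
    have : cfc (f : ℝ → ℝ) T = 0 := ContinuousLinearMap.ext fun φ => hc φ
    rw [this] at hA1
    simp at hA1
    linarith
  obtain ⟨φ₀, hφ₀⟩ := hAne
  set r : ℝ := ‖cfc (f : ℝ → ℝ) T φ₀‖ with hr
  have hrpos : 0 < r := norm_pos_iff.mpr hφ₀
  set φ : H := ((r⁻¹ : ℝ) : ℂ) • φ₀ with hφ
  set ψ : H := cfc (f : ℝ → ℝ) T φ with hψ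
  have hψeq : ψ = ((r⁻¹ : ℝ) : ℂ) • (cfc (f : ℝ → ℝ) T φ₀) := by
    rw [hψ, hφ]
    exact ContinuousLinearMap.map_smul _ _ _
  have hψ1 : ‖ψ‖ = 1 := by
    rw [hψeq, norm_smul]
    simp [norm_inv, abs_of_pos hrpos, ← hr]
    field_simp
  refine ⟨ψ, hψ1, ?_⟩
  -- the killer function
  set h : C(ℝ, ℝ) := (1 : C(ℝ,ℝ)) - cutoff (d/2) with hh
  have hhcoe : ∀ x, h x = 1 - cutoff (d/2) x := fun x => rfl
  have hh0 : ∀ x, 0 ≤ h x := fun x => by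
    rw [hhcoe]; linarith [cutoff_le_one (d/2) x]
  have hh1 : ∀ x, h x ≤ 1 := fun x => by
    rw [hhcoe]; linarith [cutoff_nonneg (d/2) x]
  have hfh : ∀ x, f x * h x * f x = 0 := by
    intro x
    rcases le_total |x| (d/2) with hx | hx
    · rw [hhcoe, cutoff_eq_one (by linarith) hx]; ring
    · rw [hf, cutoff_eq_zero (by linarith) (by linarith)]; ring
  have hsa : IsSelfAdjoint (cfc (f : ℝ → ℝ) T) := cfc_predicate _ T
  have hadj := ContinuousLinearMap.isSelfAdjoint_iff'.mp hsa
  have hkey : (inner ℂ ψ ((cfc (h : ℝ → ℝ) T) ψ) : ℂ) = 0 := by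
    have e1 : (inner ℂ ψ ((cfc (h : ℝ → ℝ) T) ψ) : ℂ)
        = inner ℂ φ ((cfc (f : ℝ → ℝ) T) ((cfc (h : ℝ → ℝ) T) ((cfc (f : ℝ → ℝ) T) φ))) := by
      have h2 := ContinuousLinearMap.adjoint_inner_left (cfc (f : ℝ → ℝ) T)
        ((cfc (h : ℝ → ℝ) T) ((cfc (f : ℝ → ℝ) T) φ)) φ
      rw [hadj] at h2
      rw [hψ, ← h2]
    have e2 : cfc (f : ℝ → ℝ) T * cfc (h : ℝ → ℝ) T * cfc (f : ℝ → ℝ) T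
        = cfc (fun x => f x * h x * f x) T := by
      rw [cfc_mul (fun x => f x * h x) (f : ℝ → ℝ) T
        ((f.continuous.mul h.continuous).continuousOn) f.continuous.continuousOn,
        cfc_mul (f : ℝ → ℝ) (h : ℝ → ℝ) T f.continuous.continuousOn h.continuous.continuousOn]
    have e3 : cfc (fun x => f x * h x * f x) T = 0 := by
      have : (fun x => f x * h x * f x) = (fun _ : ℝ => (0:ℝ)) := funext hfh
      rw [this, cfc_const_zero]
    rw [e1]
    have : (cfc (f : ℝ → ℝ) T) ((cfc (h : ℝ → ℝ) T) ((cfc (f : ℝ → ℝ) T) φ)) = 0 := by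
      have := congrArg (fun (A : H →L[ℂ] H) => A φ) (e2.trans e3)
      simpa [ContinuousLinearMap.mul_apply] using this
    rw [this, inner_zero_right]
  -- conclude
  have : IsFiniteMeasure (μm ψ) := (hμm ψ).1
  have hint := (hμm ψ).2.2 h
  rw [hkey] at hint
  simp only [Complex.zero_re] at hint
  have hmono : ((μm ψ) ((ball (0:ℝ) d)ᶜ)).toReal ≤ ∫ x, h x ∂(μm ψ) := by
    rw [← Measure.real_def, ← integral_indicator_one measurableSet_ball.compl]
    refine integral_mono ((integrable_const (1:ℝ)).indicator measurableSet_ball.compl)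
      (sm_integrable T μm hμm ψ _ h.continuous fun x => by
        rw [abs_of_nonneg (hh0 x)]; exact hh1 x) ?_
    intro x
    by_cases hx : x ∈ (ball (0:ℝ) d)ᶜ
    · rw [Set.indicator_of_mem hx]
      have hxd : d ≤ |x| := by
        simp only [Set.mem_compl_iff, mem_ball, Real.dist_eq, sub_zero, not_lt] at hx
        exact hx
      rw [hhcoe, cutoff_eq_zero (by linarith) (by linarith)]
      simp
    · rw [Set.indicator_of_notMem hx]
      exact hh0 x
  rw [hint] at hmono
  have := ENNReal.toReal_nonneg (a := (μm ψ) ((ball (0:ℝ) d)ᶜ))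
  have htr : ((μm ψ) ((ball (0:ℝ) d)ᶜ)).toReal = 0 := le_antisymm hmono this
  have hne : (μm ψ) ((ball (0:ℝ) d)ᶜ) ≠ ⊤ := measure_ne_top _ _
  exact (ENNReal.toReal_eq_zero_iff _).mp htr |>.resolve_right hne

include hμm in
lemma sm_shrink
    (hC2 : ∀ ψ : H, ∀ c : ℝ, 0 < c → ∃ d, 0 < d ∧ (μm ψ) (ball (0:ℝ) d) < ENNReal.ofReal c) :
    ∀ (n : ℕ) (Ψ : ℕ → H) (c D : ℝ), 0 < c → 0 < D →
      ∃ δ, 0 < δ ∧ δ ≤ D ∧ ∀ k < n, ((μm (Ψ k)) (ball (0:ℝ) (2*δ))).toReal ≤ c := by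
  intro n
  induction n with
  | zero => exact fun Ψ c D hc hD => ⟨D, hD, le_rfl, fun k hk => absurd hk (Nat.not_lt_zero k)⟩
  | succ n ih =>
    intro Ψ c D hc hD
    obtain ⟨δ₀, hδ₀pos, hδ₀le, hδ₀⟩ := ih Ψ c D hc hD
    obtain ⟨d, hdpos, hd⟩ := hC2 (Ψ n) c hc
    refine ⟨min δ₀ (d/2), lt_min hδ₀pos (by linarith), (min_le_left _ _).trans hδ₀le, ?_⟩
    intro k hk
    have : IsFiniteMeasure (μm (Ψ k)) := (hμm (Ψ k)).1
    rcases Nat.lt_succ_iff_lt_or_eq.mp hk with hk' | hk'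
    · refine le_trans ?_ (hδ₀ k hk')
      exact ENNReal.toReal_mono (measure_ne_top _ _)
        (measure_mono (ball_subset_ball (by nlinarith [min_le_left δ₀ (d/2)])))
    · subst hk'
      have hsub : ball (0:ℝ) (2 * min δ₀ (d/2)) ⊆ ball (0:ℝ) d := by
        refine ball_subset_ball ?_
        have := min_le_right δ₀ (d/2)
        linarith
      have hle : (μm (Ψ k)) (ball (0:ℝ) (2 * min δ₀ (d/2))) ≤ ENNReal.ofReal c :=
        le_trans (measure_mono hsub) hd.le
      calc ((μm (Ψ k)) (ball (0:ℝ) (2 * min δ₀ (d/2)))).toReal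
          ≤ (ENNReal.ofReal c).toReal := ENNReal.toReal_mono ENNReal.ofReal_ne_top hle
        _ = c := ENNReal.toReal_ofReal hc.le

include hT hμm in
lemma sm_seq (h0 : (0 : ℂ) ∈ spectrum ℂ T)
    (hC2 : ∀ ψ : H, ∀ c : ℝ, 0 < c → ∃ d, 0 < d ∧ (μm ψ) (ball (0:ℝ) d) < ENNReal.ofReal c)
    (s : ℕ → ℝ) (hs : ∀ j, 0 < s j) :
    ∃ (δ : ℕ → ℝ) (ψ : ℕ → H),
      (∀ j, 0 < δ j) ∧ (∀ j, δ (j+1) ≤ δ j) ∧ (∀ j, 2 * δ j ≤ 1 / s j) ∧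
      (∀ j, ‖ψ j‖ = 1) ∧ (∀ j, μm (ψ j) ((ball (0:ℝ) (δ j))ᶜ) = 0) ∧
      (∀ j, ∀ k < j, ((μm (ψ k)) (ball (0:ℝ) (2 * δ j))).toReal ≤ (1/16)^j / 64) := by
  have hstep : ∀ (j : ℕ) (Ψ : ℕ → H) (D : ℝ), 0 < D →
      ∃ p : ℝ × H, 0 < p.1 ∧ p.1 ≤ D ∧ 2 * p.1 ≤ 1 / s j ∧
        (∀ k < j, ((μm (Ψ k)) (ball (0:ℝ) (2 * p.1))).toReal ≤ (1/16)^j / 64) ∧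
        ‖p.2‖ = 1 ∧ μm p.2 ((ball (0:ℝ) p.1)ᶜ) = 0 := by
    intro j Ψ D hD
    have hsj := hs j
    obtain ⟨δ, hδpos, hδle, hδ⟩ := sm_shrink T μm hμm hC2 j Ψ ((1/16)^j / 64)
      (min D (1 / (2 * s j))) (by positivity) (lt_min hD (by positivity))
    obtain ⟨ψ, hψ1, hψ2⟩ := unit_support T hT μm hμm h0 δ hδpos
    refine ⟨(δ, ψ), hδpos, hδle.trans (min_le_left _ _), ?_, hδ, hψ1, hψ2⟩
    have h2 : δ ≤ 1 / (2 * s j) := hδle.trans (min_le_right _ _)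
    calc 2 * δ ≤ 2 * (1 / (2 * s j)) := by linarith
      _ = 1 / s j := by field_simp
  choose! F hF1 hF2 hF3 hF4 hF5 hF6 using hstep
  -- build the sequence by recursion, carrying the history
  let step : ℕ → ℝ × (ℕ → H) → ℝ × (ℕ → H) := fun j prev =>
    ((F (j+1) prev.2 prev.1).1, Function.update prev.2 (j+1) (F (j+1) prev.2 prev.1).2)
  let init : ℝ × (ℕ → H) := ((F 0 (fun _ => 0) 1).1, fun _ => (F 0 (fun _ => 0) 1).2)
  let st : ℕ → ℝ × (ℕ → H) := fun n => Nat.rec (motive := fun _ => ℝ × (ℕ → H)) init step n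
  have hst0 : st 0 = init := rfl
  have hstS : ∀ j, st (j+1) = step j (st j) := fun j => rfl
  set δ : ℕ → ℝ := fun n => (st n).1 with hδdef
  set ψ : ℕ → H := fun n => (st n).2 n with hψdef
  have hpos : ∀ j, 0 < δ j := by
    intro j
    induction j with
    | zero => exact hF1 0 (fun _ => 0) 1 one_pos
    | succ n ihn => exact hF1 (n+1) ((st n).2) (δ n) ihn
  have hconsist : ∀ j k, k ≤ j → (st j).2 k = ψ k := by
    intro j
    induction j with
    | zero => intro k hk; interval_cases k; rfl
    | succ n ihn =>
      intro k hk
      rcases Nat.lt_succ_iff_lt_or_eq.mp (Nat.lt_succ_of_le hk) with hk' | hk'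
      · have hkn : k ≤ n := Nat.lt_succ_iff.mp hk'
        have hne : k ≠ n + 1 := by omega
        rw [hstS n]
        show Function.update ((st n).2) (n+1) _ k = ψ k
        rw [Function.update_of_ne hne]
        exact ihn k hkn
      · subst hk'; rfl
  refine ⟨δ, ψ, hpos, ?_, ?_, ?_, ?_, ?_⟩
  · intro j
    exact hF2 (j+1) ((st j).2) (δ j) (hpos j)
  · intro j
    cases j with
    | zero => exact hF3 0 (fun _ => 0) 1 one_pos
    | succ n => exact hF3 (n+1) ((st n).2) (δ n) (hpos n)
  · intro j
    cases j with
    | zero => exact hF5 0 (fun _ => 0) 1 one_pos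
    | succ n =>
      have := hF5 (n+1) ((st n).2) (δ n) (hpos n)
      have he : ψ (n+1) = (F (n+1) ((st n).2) (δ n)).2 := by
        rw [hψdef]
        show (st (n+1)).2 (n+1) = _
        rw [hstS n]
        exact Function.update_self _ _ _
      rw [he]
      exact this
  · intro j
    cases j with
    | zero => exact hF6 0 (fun _ => 0) 1 one_pos
    | succ n =>
      have he : ψ (n+1) = (F (n+1) ((st n).2) (δ n)).2 := by
        show (st (n+1)).2 (n+1) = _
        rw [hstS n]
        exact Function.update_self _ _ _
      rw [he]
      exact hF6 (n+1) ((st n).2) (δ n) (hpos n)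
  · intro j k hk
    cases j with
    | zero => exact absurd hk (Nat.not_lt_zero k)
    | succ n =>
      have := hF4 (n+1) ((st n).2) (δ n) (hpos n) k hk
      rwa [hconsist n k (Nat.lt_succ_iff.mp hk)] at this

end ops


set_option maxHeartbeats 2000000 in
/-- For a negative bounded self-adjoint operator with `0 ∈ σ(T)` and
`α(t) → ∞`, there are `η ∈ H` and `t_j → ∞` with `μ_η(B(0;1/t_j)) ≥ 1/α(t_j)` for large `j`. -/
theorem stmt_14 {H : Type*} [NormedAddCommGroup H] [InnerProductSpace ℂ H] [CompleteSpace H]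
    [TopologicalSpace.SeparableSpace H] (hinf : ¬ FiniteDimensional ℂ H)
    (T : H →L[ℂ] H) (hT : IsSelfAdjoint T)
    (hneg : ∀ ψ : H, (inner ℂ ψ (T ψ) : ℂ).re ≤ 0)
    (h0 : (0 : ℂ) ∈ spectrum ℂ T)
    (μm : H → Measure ℝ) (hμm : ∀ ψ : H, IsSpectralMeasure T ψ (μm ψ))
    (a : ℝ → ℝ) (ha_pos : ∀ t > (0 : ℝ), 0 < a t)
    (ha : Filter.Tendsto a Filter.atTop Filter.atTop) :
    ∃ (η : H) (tj : ℕ → ℝ), Filter.Tendsto tj Filter.atTop Filter.atTop ∧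
      ∀ᶠ j in Filter.atTop,
        ENNReal.ofReal (1 / a (tj j)) ≤ μm η (Metric.ball 0 (1 / tj j)) := by
  have hpick : ∀ M : ℝ, ∀ j : ℕ, ∃ t : ℝ, (j:ℝ) ≤ t ∧ 0 < t ∧ M ≤ a t := by
    intro M j
    have h1 : ∀ᶠ t in atTop, M ≤ a t := ha.eventually_ge_atTop M
    have h2 : ∀ᶠ t : ℝ in atTop, (j:ℝ) ≤ t := eventually_ge_atTop _
    have h3 : ∀ᶠ t : ℝ in atTop, (0:ℝ) < t := eventually_gt_atTop _
    obtain ⟨t, ht1, ht2, ht3⟩ := (h1.and (h2.and h3)).exists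
    exact ⟨t, ht2, ht3, ht1⟩
  by_cases hC1 : ∃ ψ : H, ∃ c : ℝ, 0 < c ∧ ∀ d, 0 < d → ENNReal.ofReal c ≤ μm ψ (ball (0:ℝ) d)
  · obtain ⟨ψ, c, hc, hball⟩ := hC1
    choose tj htj1 htj2 htj3 using hpick (1/c)
    refine ⟨ψ, tj, tendsto_atTop_mono htj1 tendsto_natCast_atTop_atTop,
      Filter.Eventually.of_forall fun j => ?_⟩
    have h1a : (1:ℝ) / a (tj j) ≤ c := by
      have hac : (0:ℝ) < 1/c := by positivity
      have := one_div_le_one_div_of_le hac (htj3 j)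
      rwa [one_div_one_div] at this
    exact le_trans (ENNReal.ofReal_le_ofReal h1a) (hball _ (by have := htj2 j; positivity))
  · push_neg at hC1
    have hC2 : ∀ ψ : H, ∀ c : ℝ, 0 < c → ∃ d, 0 < d ∧ (μm ψ) (ball (0:ℝ) d) < ENNReal.ofReal c := by
      intro ψ c hc
      obtain ⟨d, hd, hlt⟩ := hC1 ψ c hc
      exact ⟨d, hd, hlt⟩
    -- choose times
    choose s hs1 hs2 hs3 using fun j : ℕ => hpick (4 * 16^j) j
    obtain ⟨δ, ψ, hδpos, hδmono, hδs, hψnorm, hψsupp, hψsmall⟩ :=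
      sm_seq T hT μm hμm h0 hC2 s hs2
    have hanti : Antitone δ := antitone_nat_of_succ_le hδmono
    have hpow : ∀ j : ℕ, ((1/4:ℝ)^j)^2 = (1/16)^j := fun j => by
      rw [← pow_mul, show j*2 = 2*j from mul_comm j 2, pow_mul]; norm_num
    have hnorm_smul : ∀ k : ℕ, ‖((1/4:ℝ)^k) • ψ k‖ = (1/4:ℝ)^k := by
      intro k
      rw [norm_smul, hψnorm k, Real.norm_eq_abs, abs_of_nonneg (by positivity), mul_one]
    have hgeom : Summable (fun k : ℕ => ((1/4:ℝ))^k) :=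
      summable_geometric_of_lt_one (by norm_num) (by norm_num)
    have hsummable : Summable (fun k : ℕ => ((1/4:ℝ)^k) • ψ k) := by
      refine Summable.of_norm ?_
      simpa only [hnorm_smul] using hgeom
    set η : H := ∑' k : ℕ, ((1/4:ℝ)^k) • ψ k with hη
    have : IsFiniteMeasure (μm η) := (hμm η).1
    have key : ∀ j, (1/4) * ((1/4:ℝ)^j)^2 ≤ ((μm η) (ball (0:ℝ) (1 / s j))).toReal := by
      intro j
      set g : C(ℝ,ℝ) := cutoff (δ j) with hg
      set A : H →L[ℂ] H := cfc (g : ℝ → ℝ) T with hA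
      set Bc : H →L[ℂ] H := cfc (((1:C(ℝ,ℝ)) - g : C(ℝ,ℝ)) : ℝ → ℝ) T with hB
      have hcoe1 : (((1:C(ℝ,ℝ)) - g : C(ℝ,ℝ)) : ℝ → ℝ) = fun t => 1 - g t := rfl
      have hAB : ∀ x : H, A x + Bc x = x := by
        intro x
        have e1 : A + Bc = cfc (fun t : ℝ => g t + (1 - g t)) T := by
          rw [hA, hB, hcoe1,
            cfc_add T (g : ℝ → ℝ) (fun t => 1 - g t) g.continuous.continuousOn
              (continuous_const.sub g.continuous).continuousOn]
        have e2 : (fun t : ℝ => g t + (1 - g t)) = fun _ : ℝ => (1:ℝ) := by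
          funext t; ring
        have e3 : A + Bc = 1 := by rw [e1, e2, cfc_const_one ℝ T hT]
        calc A x + Bc x = (A + Bc) x := (ContinuousLinearMap.add_apply _ _ _).symm
          _ = x := by rw [e3, ContinuousLinearMap.one_apply]
      have hBψ : ∀ k, j ≤ k → Bc (ψ k) = 0 := by
        intro k hk
        have hb := sm_ub T hT μm hμm (ψ k) ((1:C(ℝ,ℝ)) - g)
          ((closedBall (0:ℝ) (δ j))ᶜ) measurableSet_closedBall.compl
          (fun x => by rw [hcoe1]; simp; linarith [cutoff_le_one (δ j) x])
          (fun x => by rw [hcoe1]; simp; linarith [cutoff_nonneg (δ j) x])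
          (fun x hx => by
            rw [hcoe1]
            simp only [Set.notMem_compl_iff, mem_closedBall, Real.dist_eq, sub_zero] at hx
            simp [hg, cutoff_eq_one (hδpos j) hx])
        have hz : (μm (ψ k)) ((closedBall (0:ℝ) (δ j))ᶜ) = 0 := by
          refine le_antisymm (le_trans (measure_mono ?_) (hψsupp k).le) (zero_le)
          exact Set.compl_subset_compl.mpr
            (ball_subset_closedBall.trans (closedBall_subset_closedBall (hanti hk)))
        rw [hz] at hb
        simp only [ENNReal.toReal_zero] at hb
        have := norm_nonneg (Bc (ψ k))
        have h2 : ‖Bc (ψ k)‖ = 0 := by nlinarith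
        rwa [norm_eq_zero] at h2
      set U : H := ∑ k ∈ Finset.range j, ((1/4:ℝ)^k) • ψ k with hU
      set V : H := ∑' i : ℕ, ((1/4:ℝ)^(i+j)) • ψ (i+j) with hV
      have hUV : U + V = η := Summable.sum_add_tsum_nat_add j hsummable
      have hVsummable : Summable (fun i : ℕ => ((1/4:ℝ)^(i+j)) • ψ (i+j)) :=
        (summable_nat_add_iff j).mpr hsummable
      have hBV : Bc V = 0 := by
        rw [hV, Bc.map_tsum hVsummable]
        have : ∀ i : ℕ, Bc (((1/4:ℝ)^(i+j)) • ψ (i+j)) = 0 := by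
          intro i
          rw [Bc.map_smul_of_tower, hBψ (i+j) (Nat.le_add_left j i), smul_zero]
        simp only [this, tsum_zero]
      have hAV : A V = V := by
        have := hAB V
        rw [hBV, add_zero] at this
        exact this
      -- bound on A U
      have hAψk : ∀ k < j, ‖A (ψ k)‖ ≤ (1/4:ℝ)^j / 8 := by
        intro k hk
        have hb := sm_ub T hT μm hμm (ψ k) g (ball (0:ℝ) (2 * δ j)) measurableSet_ball
          (cutoff_nonneg (δ j)) (cutoff_le_one (δ j))
          (fun x hx => by
            simp only [mem_ball, Real.dist_eq, sub_zero, not_lt] at hx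
            exact cutoff_eq_zero (hδpos j) hx)
        have hsmall := hψsmall j k hk
        have hb2 : ‖A (ψ k)‖^2 ≤ ((1/4:ℝ)^j / 8)^2 := by
          have he : ((1/4:ℝ)^j / 8)^2 = (1/16)^j / 64 := by
            rw [div_pow, hpow j]; norm_num
          rw [he]
          exact hb.trans hsmall
        have hpos8 : (0:ℝ) < (1/4:ℝ)^j / 8 := by positivity
        nlinarith [norm_nonneg (A (ψ k))]
      have hAU : ‖A U‖ ≤ (1/6) * (1/4:ℝ)^j := by
        have e1 : A U = ∑ k ∈ Finset.range j, ((1/4:ℝ)^k) • A (ψ k) := by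
          rw [hU, map_sum]
          exact Finset.sum_congr rfl fun k _ => A.map_smul_of_tower _ _
        rw [e1]
        refine le_trans (norm_sum_le _ _) ?_
        have e2 : ∀ k ∈ Finset.range j, ‖((1/4:ℝ)^k) • A (ψ k)‖ ≤ ((1/4:ℝ))^k * ((1/4:ℝ)^j / 8) := by
          intro k hk
          rw [norm_smul, Real.norm_eq_abs, abs_of_nonneg (by positivity : (0:ℝ) ≤ (1/4:ℝ)^k)]
          exact mul_le_mul_of_nonneg_left (hAψk k (Finset.mem_range.mp hk)) (by positivity)
        refine le_trans (Finset.sum_le_sum e2) ?_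
        rw [← Finset.sum_mul]
        have e3 : ∑ k ∈ Finset.range j, ((1/4:ℝ))^k ≤ 4/3 := by
          refine le_trans (Summable.sum_le_tsum (Finset.range j) (fun i _ => by positivity) hgeom) ?_
          rw [tsum_geometric_of_lt_one (by norm_num) (by norm_num)]
          norm_num
        have hP : (0:ℝ) ≤ (1/4:ℝ)^j / 8 := by positivity
        nlinarith
      -- lower bound on V
      have hVlb : (2/3) * (1/4:ℝ)^j ≤ ‖V‖ := by
        have hdecomp := Summable.sum_add_tsum_nat_add (f := fun i : ℕ => ((1/4:ℝ)^(i+j)) • ψ (i+j))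
          1 hVsummable
        rw [Finset.sum_range_one] at hdecomp
        set tail : H := ∑' i : ℕ, ((1/4:ℝ)^(i+1+j)) • ψ (i+1+j) with htail
        have hd2 : ((1/4:ℝ)^(0+j)) • ψ (0+j) + tail = V := hdecomp
        have htailnorm : ‖tail‖ ≤ (1/3) * (1/4:ℝ)^j := by
          have hsn : Summable (fun i : ℕ => ‖((1/4:ℝ)^(i+1+j)) • ψ (i+1+j)‖) := by
            have : (fun i : ℕ => ‖((1/4:ℝ)^(i+1+j)) • ψ (i+1+j)‖)
                = fun i : ℕ => (1/4:ℝ)^(i+1+j) := by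
              funext i; exact hnorm_smul (i+1+j)
            rw [this]
            have e4 : (fun i : ℕ => ((1/4:ℝ))^(i+1+j)) = fun i => (1/4:ℝ)^(1+j) * (1/4)^i := by
              funext i; rw [show i+1+j = (1+j)+i from by omega, pow_add]
            rw [e4]
            exact hgeom.mul_left _
          refine le_trans (norm_tsum_le_tsum_norm hsn) ?_
          have e5 : ∑' i : ℕ, ‖((1/4:ℝ)^(i+1+j)) • ψ (i+1+j)‖
              = (1/4:ℝ)^(1+j) * (1-(1/4:ℝ))⁻¹ := by
            have e6 : ∀ i : ℕ, ‖((1/4:ℝ)^(i+1+j)) • ψ (i+1+j)‖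
                = (1/4:ℝ)^(1+j) * (1/4)^i := by
              intro i
              rw [hnorm_smul (i+1+j), show i+1+j = (1+j)+i from by omega, pow_add]
            rw [tsum_congr e6, tsum_mul_left, tsum_geometric_of_lt_one (by norm_num) (by norm_num)]
          rw [e5, pow_add]
          norm_num
          nlinarith [pow_nonneg (by norm_num : (0:ℝ) ≤ 1/4) j]
        have hf0 : ‖((1/4:ℝ)^(0+j)) • ψ (0+j)‖ = (1/4:ℝ)^j := by
          rw [hnorm_smul (0+j), Nat.zero_add]
        have := norm_sub_norm_le (((1/4:ℝ)^(0+j)) • ψ (0+j)) (-tail)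
        rw [sub_neg_eq_add, norm_neg, hd2, hf0] at this
        linarith
      -- lower bound on ‖A η‖
      have hAη : (1/2) * (1/4:ℝ)^j ≤ ‖A η‖ := by
        have e7 : A η = A U + A V := by rw [← hUV, map_add]
        have h8 := norm_sub_norm_le V (-(A U))
        rw [sub_neg_eq_add, norm_neg] at h8
        rw [e7, hAV, add_comm]
        linarith
      -- conclude
      have hub := sm_ub T hT μm hμm η g (ball (0:ℝ) (1 / s j)) measurableSet_ball
        (cutoff_nonneg (δ j)) (cutoff_le_one (δ j))
        (fun x hx => by
          simp only [mem_ball, Real.dist_eq, sub_zero, not_lt] at hx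
          have h2d : 2 * δ j ≤ |x| := le_trans (hδs j) hx
          exact cutoff_eq_zero (hδpos j) h2d)
      have hsq : (1/4) * ((1/4:ℝ)^j)^2 ≤ ‖A η‖^2 := by nlinarith [pow_nonneg (by norm_num : (0:ℝ) ≤ 1/4) j]
      exact hsq.trans hub
    refine ⟨η, s, tendsto_atTop_mono hs1 tendsto_natCast_atTop_atTop,
      Filter.Eventually.of_forall fun j => ?_⟩
    have h416 : (0:ℝ) < 4 * 16^j := by positivity
    have ha1 : (1:ℝ) / a (s j) ≤ 1 / (4 * 16^j) := one_div_le_one_div_of_le h416 (hs3 j)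
    have ha2 : (1:ℝ) / (4 * 16^j) = (1/4) * ((1/4:ℝ)^j)^2 := by
      rw [hpow j, div_pow, one_pow]
      rw [div_mul_div_comm, one_mul]
    have hle : (1:ℝ) / a (s j) ≤ ((μm η) (ball (0:ℝ) (1 / s j))).toReal := by
      rw [ha2] at ha1
      exact ha1.trans (key j)
    calc ENNReal.ofReal (1 / a (s j))
        ≤ ENNReal.ofReal (((μm η) (ball (0:ℝ) (1 / s j))).toReal) := ENNReal.ofReal_le_ofReal hle
      _ = (μm η) (ball (0:ℝ) (1 / s j)) := ENNReal.ofReal_toReal (measure_ne_top _ _)
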